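/- Fix s ≥ 1, P_s = {a_1,…,a_s, c | a_i < c}. Let M((m,p),(n,q)) be as above. Then for p ≤ m ≤ n, p ≤ q ≤ n, p ≥ 1: M((m,p),(n,q)) = Σ_{k=0}^{n−m} M((m−p,0),(n−p−k,q−p)) · s^k · C(p+k−1, p−1). -/

import Mathlib

/-- The alphabet `P_s = {a_1, …, a_s, c}` with `a_i < c`: `some i` is `a_i`, `none` is `c`. -/
abbrev Letter (s : ℕ) := Option (Fin s)

/-- The generalized subword order on words over `P_s`. -/
def WLE {s : ℕ} (u w : List (Letter s)) : Prop :=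
  ∃ w', w'.Sublist w ∧ List.Forall₂ (fun x y => x = y ∨ y = none) u w'

/-- `M((m,p),(n,q))`: the number of words of length `n` with exactly `q` letters `c`
lying above `a_1^{m−p} c^p` in the generalized subword order. -/
noncomputable def M (s : ℕ) (hs : 1 ≤ s) (m p n q : ℕ) : ℕ :=
  {w : List (Letter s) | w.length = n ∧ w.count (none : Letter s) = q ∧
    WLE (List.replicate (m - p) (some (⟨0, hs⟩ : Fin s)) ++
      List.replicate p (none : Letter s)) w}.ncard

namespace MAux

variable {s : ℕ}

def goodb (hs : 1 ≤ s) (x : Letter s) : Bool := x == some ⟨0, hs⟩ || x == none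

def P (hs : 1 ≤ s) (r p : ℕ) (w : List (Letter s)) : Prop :=
  ∃ w₁ w₂, w = w₁ ++ w₂ ∧ r ≤ w₁.countP (goodb hs) ∧ p ≤ w₂.count none

lemma forall₂_replicate_dest {α β : Type*} {R : α → β → Prop} {x : α} {k : ℕ} {v : List β}
    (h : List.Forall₂ R (List.replicate k x) v) : v.length = k ∧ ∀ y ∈ v, R x y := by
  have hlen := h.length_eq
  simp only [List.length_replicate] at hlen
  refine ⟨hlen.symm, fun y hy => ?_⟩
  obtain ⟨i, rfl⟩ := List.mem_iff_get.mp hy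
  have h2 := (List.forall₂_iff_get.mp h).2 i (by simp only [List.length_replicate]; omega) i.isLt
  simpa using h2

lemma forall₂_replicate_of {α β : Type*} {R : α → β → Prop} {x : α} {k : ℕ} {v : List β}
    (hlen : v.length = k) (h : ∀ y ∈ v, R x y) : List.Forall₂ R (List.replicate k x) v := by
  subst hlen
  induction v with
  | nil => simp
  | cons y t ih =>
    rw [List.length_cons, List.replicate_succ]
    exact List.Forall₂.cons (h y (by simp)) (ih fun z hz => h z (by simp [hz]))

lemma wle_iff (hs : 1 ≤ s) (r p : ℕ) (w : List (Letter s)) :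
    WLE (List.replicate r (some (⟨0, hs⟩ : Fin s)) ++ List.replicate p (none : Letter s)) w ↔
      P hs r p w := by
  constructor
  · rintro ⟨w', hsub, hf⟩
    have hflip := hf.flip
    have h₁ := (List.forall₂_take_append w' _ _ hflip).flip
    have h₂ := (List.forall₂_drop_append w' _ _ hflip).flip
    have hsub' : ((w'.take (List.replicate r (some (⟨0, hs⟩ : Fin s))).length) ++
        (w'.drop (List.replicate r (some (⟨0, hs⟩ : Fin s))).length)).Sublist w := by
      rw [List.take_append_drop]; exact hsub
    obtain ⟨w₁, w₂, rfl, hs₁, hs₂⟩ := List.append_sublist_iff.mp hsub'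
    obtain ⟨hl₁, hm₁⟩ := forall₂_replicate_dest h₁
    obtain ⟨hl₂, hm₂⟩ := forall₂_replicate_dest h₂
    refine ⟨w₁, w₂, rfl, ?_, ?_⟩
    · calc r = List.countP (goodb hs) (w'.take _) := by
            rw [List.countP_eq_length.mpr, hl₁]
            intro y hy
            rcases hm₁ y hy with h | h <;> simp [goodb, ← h]
        _ ≤ _ := hs₁.countP_le
    · calc p = List.count (none : Letter s) (w'.drop _) := by
            have : ∀ y ∈ w'.drop (List.replicate r (some (⟨0, hs⟩ : Fin s))).length, y = none := by
              intro y hy; rcases hm₂ y hy with h | h <;> simp [← h]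
            rw [List.count_eq_countP, List.countP_eq_length.mpr, hl₂]
            intro y hy; simp [this y hy]
        _ ≤ _ := hs₂.count_le _
  · rintro ⟨w₁, w₂, rfl, h1, h2⟩
    refine ⟨(w₁.filter (goodb hs)).take r ++ (w₂.filter (· == (none : Letter s))).take p,
      List.Sublist.append ((List.take_sublist _ _).trans List.filter_sublist)
        ((List.take_sublist _ _).trans List.filter_sublist), ?_⟩
    have hl1 : ((w₁.filter (goodb hs)).take r).length = r := by
      rw [List.length_take, ← List.countP_eq_length_filter]; omega
    have hl2 : ((w₂.filter (· == (none : Letter s))).take p).length = p := by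
      rw [List.length_take, ← List.countP_eq_length_filter]
      rw [List.count_eq_countP] at h2; omega
    refine List.rel_append ?_ ?_
    · refine forall₂_replicate_of hl1 fun y hy => ?_
      have := List.of_mem_filter (List.mem_of_mem_take hy)
      simp only [goodb, Bool.or_eq_true, beq_iff_eq] at this
      rcases this with h | h
      · exact Or.inl h.symm
      · exact Or.inr h
    · refine forall₂_replicate_of hl2 fun y hy => ?_
      have := List.of_mem_filter (List.mem_of_mem_take hy)
      simp only [beq_iff_eq] at this
      exact Or.inl this.symm


noncomputable def allW (s n : ℕ) : Finset (List (Letter s)) :=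
  (Finset.univ : Finset (Fin n → Letter s)).image List.ofFn

lemma mem_allW {n : ℕ} {w : List (Letter s)} : w ∈ allW s n ↔ w.length = n := by
  constructor
  · intro h
    obtain ⟨f, _, rfl⟩ := Finset.mem_image.mp h
    simp
  · rintro rfl
    exact Finset.mem_image.mpr ⟨w.get, Finset.mem_univ _, List.ofFn_get w⟩

open scoped Classical in
noncomputable def SF (hs : 1 ≤ s) (r p n q : ℕ) : Finset (List (Letter s)) :=
  (allW s n).filter fun w => w.count none = q ∧ P hs r p w

lemma mem_SF {hs : 1 ≤ s} {r p n q : ℕ} {w : List (Letter s)} :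
    w ∈ SF hs r p n q ↔ w.length = n ∧ w.count none = q ∧ P hs r p w := by
  classical
  simp [SF, mem_allW, Finset.mem_filter]

lemma M_eq_SF (hs : 1 ≤ s) (m p n q : ℕ) :
    M s hs m p n q = (SF hs (m - p) p n q).card := by
  rw [M, ← Set.ncard_coe_finset]
  congr 1
  ext w
  simp only [Set.mem_setOf_eq, Finset.mem_coe, mem_SF, wle_iff]

lemma SF_card_zero (hs : 1 ≤ s) {r p n q : ℕ} (h : n < r + p) : (SF hs r p n q).card = 0 := by
  rw [Finset.card_eq_zero, Finset.eq_empty_iff_forall_notMem]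
  intro w hw
  obtain ⟨hlen, -, w₁, w₂, rfl, h1, h2⟩ := mem_SF.mp hw
  have e1 : w₁.countP (goodb hs) ≤ w₁.length := List.countP_le_length
  have e2 : w₂.count none ≤ w₂.length := List.count_le_length
  rw [List.length_append] at hlen
  omega

lemma exists_last_split {α : Type*} {a : α} {l : List α} (h : a ∈ l) :
    ∃ l₁ l₂, l = l₁ ++ a :: l₂ ∧ a ∉ l₂ := by
  induction l with
  | nil => simp at h
  | cons x t ih =>
    by_cases hat : a ∈ t
    · obtain ⟨l₁, l₂, rfl, h2⟩ := ih hat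
      exact ⟨x :: l₁, l₂, rfl, h2⟩
    · have hax : a = x := by
        rcases List.mem_cons.mp h with h | h
        · exact h
        · exact absurd h hat
      subst hax
      exact ⟨[], t, rfl, hat⟩

lemma last_split_unique {α : Type*} {a : α} {w₁ u w₁' u' : List α}
    (h : w₁ ++ a :: u = w₁' ++ a :: u') (hu : a ∉ u) (hu' : a ∉ u') : w₁ = w₁' ∧ u = u' := by
  have key : ∀ (v v' x x' : List α), v ++ a :: x = v' ++ a :: x' → a ∉ x' →
      x.length ≤ x'.length → x.length = x'.length := by
    intro v v' x x' heq hx' hle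
    rcases Nat.eq_or_lt_of_le hle with h | h
    · exact h
    · exfalso
      have hs1 : a :: x <:+ v' ++ a :: x' := ⟨v, heq⟩
      have hs2 : a :: x' <:+ v' ++ a :: x' := ⟨v', rfl⟩
      have := List.suffix_of_suffix_length_le hs1 hs2 (by simp; omega)
      obtain ⟨t, ht⟩ := this
      cases t with
      | nil =>
        simp only [List.nil_append, List.cons.injEq] at ht
        rw [ht.2] at h
        omega
      | cons b t' =>
        have hb : b = a ∧ t' ++ a :: x = x' := by
          rw [List.cons_append] at ht
          exact ⟨(List.cons.inj ht).1, (List.cons.inj ht).2⟩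
        exact hx' (hb.2 ▸ List.mem_append_right t' List.mem_cons_self)
  have hlen : u.length = u'.length := by
    rcases Nat.le_total u.length u'.length with hle | hle
    · exact key _ _ _ _ h hu' hle
    · exact (key _ _ _ _ h.symm hu hle).symm
  have := List.append_inj' h (by simp [hlen])
  exact ⟨this.1, (List.cons.inj this.2).2⟩

lemma P_split (hs : 1 ≤ s) {r p : ℕ} (hp : 1 ≤ p) {w₁ u : List (Letter s)}
    (hu : (none : Letter s) ∉ u) :
    P hs r p (w₁ ++ none :: u) ↔ P hs r (p - 1) w₁ := by
  have hu0 : u.count none = 0 := List.count_eq_zero_of_not_mem hu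
  constructor
  · rintro ⟨A, B, hsplit, hA, hB⟩
    have hBlen : u.length < B.length := by
      by_contra hle
      push_neg at hle
      have hsB : B <:+ w₁ ++ none :: u := ⟨A, hsplit.symm⟩
      have hsu : u <:+ w₁ ++ none :: u := ⟨w₁ ++ [none], by simp⟩
      obtain ⟨t, ht⟩ := List.suffix_of_suffix_length_le hsB hsu hle
      have : B.count none ≤ u.count none := by
        rw [← ht, List.count_append]; omega
      omega
    have hAw : A <+: w₁ := by
      have hlensum := congrArg List.length hsplit
      simp [List.length_append] at hlensum
      refine List.prefix_of_prefix_length_le ⟨B, hsplit.symm⟩ ⟨none :: u, rfl⟩ (by omega)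
    obtain ⟨B₁, rfl⟩ := hAw
    have hB' : B = B₁ ++ none :: u := by
      apply List.append_cancel_left (as := A)
      rw [← hsplit, List.append_assoc]
    subst hB'
    rw [List.count_append, List.count_cons] at hB
    simp [hu0] at hB
    exact ⟨A, B₁, rfl, hA, by omega⟩
  · rintro ⟨A, B, rfl, hA, hB⟩
    refine ⟨A, B ++ none :: u, by simp, hA, ?_⟩
    rw [List.count_append, List.count_cons]
    simp [hu0]
    omega

lemma exists_ofFn {u : List (Letter s)} (hu : (none : Letter s) ∉ u) :
    ∃ f : Fin u.length → Fin s, u = (List.ofFn f).map some := by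
  have h : ∀ i : Fin u.length, (u.get i).isSome := by
    intro i
    cases hx : u.get i with
    | none => exact absurd (hx ▸ u.get_mem i) hu
    | some v => rfl
  refine ⟨fun i => (u.get i).get (h i), ?_⟩
  apply List.ext_get (by simp)
  intro i h1 h2
  simp [Option.some_get]


lemma SF_eq_biUnion (hs : 1 ≤ s) {r p n q : ℕ} (hp : 1 ≤ p) (hq : 1 ≤ q) :
    SF hs r p n q = (Finset.range n).biUnion (fun j =>
      ((SF hs r (p - 1) (n - 1 - j) (q - 1)) ×ˢ (Finset.univ : Finset (Fin j → Fin s))).image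
        (fun x => x.1 ++ none :: (List.ofFn x.2).map some)) := by
  ext w
  simp only [Finset.mem_biUnion, Finset.mem_range, Finset.mem_image, Finset.mem_product,
    Finset.mem_univ, and_true, mem_SF, Prod.exists]
  constructor
  · rintro ⟨hlen, hcnt, hP⟩
    have hmem : (none : Letter s) ∈ w := List.count_pos_iff.mp (by omega)
    obtain ⟨w₁, u, rfl, hu⟩ := exists_last_split hmem
    obtain ⟨f, hf⟩ := exists_ofFn hu
    have hlw : w₁.length + 1 + u.length = n := by
      rw [List.length_append, List.length_cons] at hlen; omega
    have hcnt' : w₁.count none = q - 1 := by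
      rw [List.count_append, List.count_cons] at hcnt
      simp [List.count_eq_zero_of_not_mem hu] at hcnt
      omega
    refine ⟨u.length, by omega, w₁, f, ⟨⟨by omega, hcnt', (P_split hs hp hu).mp hP⟩, ?_⟩⟩
    rw [← hf]
  · rintro ⟨j, hj, w₁, f, ⟨⟨hl, hc, hP⟩, rfl⟩⟩
    have hu : (none : Letter s) ∉ (List.ofFn f).map some := by simp [List.mem_ofFn]
    refine ⟨?_, ?_, (P_split hs hp hu).mpr hP⟩
    · rw [List.length_append, List.length_cons]
      simp [hl]
      omega
    · rw [List.count_append, List.count_cons, List.count_eq_zero_of_not_mem hu, hc]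
      simp
      omega

lemma one_step (hs : 1 ≤ s) {r p n q : ℕ} (hp : 1 ≤ p) (hq : 1 ≤ q) :
    (SF hs r p n q).card
      = ∑ j ∈ Finset.range n, (SF hs r (p - 1) (n - 1 - j) (q - 1)).card * s ^ j := by
  rw [SF_eq_biUnion hs hp hq, Finset.card_biUnion]
  · refine Finset.sum_congr rfl fun j hj => ?_
    rw [Finset.card_image_of_injective _ ?_, Finset.card_product]
    · simp [Finset.card_univ]
    · rintro ⟨a, f⟩ ⟨b, g⟩ hab
      simp only at hab
      obtain ⟨h1, h2⟩ := List.append_inj' hab (by simp)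
      have h3 := (List.cons.inj h2).2
      have h4 : List.ofFn f = List.ofFn g :=
        List.map_injective_iff.mpr (Option.some_injective _) h3
      have h5 : f = g := by
        have := List.ofFn_injective h4
        exact this
      simp [h1, h5]
  · intro j hj k hk hjk
    rw [Function.onFun, Finset.disjoint_left]
    rintro w hwj hwk
    simp only [Finset.mem_image, Finset.mem_product, Finset.mem_univ, and_true,
      Prod.exists] at hwj hwk
    obtain ⟨a, f, -, rfl⟩ := hwj
    obtain ⟨b, g, -, heq⟩ := hwk
    have hna : (none : Letter s) ∉ (List.ofFn f).map some := by simp [List.mem_ofFn]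
    have hnb : (none : Letter s) ∉ (List.ofFn g).map some := by simp [List.mem_ofFn]
    have := (last_split_unique heq.symm hna hnb).2
    have := congrArg List.length this
    simp at this
    exact hjk (by omega)
lemma one_step' (hs : 1 ≤ s) {r p n q : ℕ} (hp : 1 ≤ p) (hq : 1 ≤ q) (hn : r + p ≤ n) :
    (SF hs r p n q).card = ∑ j ∈ Finset.range (n - (r + p) + 1),
      (SF hs r (p - 1) (n - 1 - j) (q - 1)).card * s ^ j := by
  rw [one_step hs hp hq]
  refine (Finset.sum_subset ?_ ?_).symm
  · intro j hj
    simp only [Finset.mem_range] at hj ⊢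
    omega
  · intro j hj hj'
    simp only [Finset.mem_range] at hj hj'
    rw [SF_card_zero hs (by omega), zero_mul]

lemma triangle {M : Type*} [AddCommMonoid M] (N : ℕ) (f : ℕ → ℕ → M) :
    ∑ j ∈ Finset.range (N + 1), ∑ i ∈ Finset.range (N - j + 1), f j i
      = ∑ k ∈ Finset.range (N + 1), ∑ j ∈ Finset.range (k + 1), f j (k - j) := by
  rw [Finset.sum_sigma', Finset.sum_sigma']
  refine Finset.sum_nbij' (i := fun x => ⟨x.1 + x.2, x.1⟩) (j := fun x => ⟨x.2, x.1 - x.2⟩)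
    ?_ ?_ ?_ ?_ ?_
  · rintro ⟨a, b⟩ h
    simp only [Finset.mem_sigma, Finset.mem_range] at h ⊢
    omega
  · rintro ⟨a, b⟩ h
    simp only [Finset.mem_sigma, Finset.mem_range] at h ⊢
    omega
  · rintro ⟨a, b⟩ h
    simp only [Finset.mem_sigma, Finset.mem_range] at h
    show (⟨a, a + b - a⟩ : Σ _ : ℕ, ℕ) = ⟨a, b⟩
    exact congrArg (Sigma.mk a) (by omega)
  · rintro ⟨a, b⟩ h
    simp only [Finset.mem_sigma, Finset.mem_range] at h
    show (⟨b + (a - b), b⟩ : Σ _ : ℕ, ℕ) = ⟨a, b⟩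
    have e : b + (a - b) = a := by omega
    rw [e]
  · rintro ⟨a, b⟩ h
    simp only [Nat.add_sub_cancel_left]

lemma hockey (a k : ℕ) :
    ∑ i ∈ Finset.range (k + 1), (a + i).choose a = (a + k + 1).choose (a + 1) := by
  have h := Nat.sum_Icc_choose (a + k) a
  rw [← Finset.Ico_add_one_right_eq_Icc, Finset.sum_Ico_eq_sum_range] at h
  have h2 : a + k + 1 - a = k + 1 := by omega
  rw [h2] at h
  exact h

lemma aux (hs : 1 ≤ s) : ∀ p r n q, 1 ≤ p → r + p ≤ n → p ≤ q →
    (SF hs r p n q).card = ∑ k ∈ Finset.range (n - (r + p) + 1),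
      (SF hs r 0 (n - p - k) (q - p)).card * s ^ k * (p + k - 1).choose (p - 1) := by
  intro p
  induction p with
  | zero => intro r n q h; omega
  | succ p' ih =>
    intro r n q hp hn hq
    rcases Nat.eq_zero_or_pos p' with rfl | hp'
    · rw [one_step' hs (by omega) (by omega) hn]
      refine Finset.sum_congr rfl fun k hk => ?_
      simp
    · rw [one_step' hs (by omega) (by omega) hn]
      simp only [Nat.add_sub_cancel]
      set N := n - (r + (p' + 1)) with hNdef
      have step1 : ∀ j ∈ Finset.range (N + 1),
          (SF hs r p' (n - 1 - j) (q - 1)).card * s ^ j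
            = ∑ i ∈ Finset.range (N - j + 1),
                (SF hs r 0 (n - (p' + 1) - (j + i)) (q - (p' + 1))).card * s ^ (j + i)
                  * (p' - 1 + i).choose (p' - 1) := by
        intro j hj
        simp only [Finset.mem_range] at hj
        rw [ih r (n - 1 - j) (q - 1) hp' (by omega) (by omega)]
        have hrange : n - 1 - j - (r + p') + 1 = N - j + 1 := by omega
        rw [hrange, Finset.sum_mul]
        refine Finset.sum_congr rfl fun i hi => ?_
        simp only [Finset.mem_range] at hi
        have e1 : n - 1 - j - p' - i = n - (p' + 1) - (j + i) := by omega
        have e2 : q - 1 - p' = q - (p' + 1) := by omega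
        have e3 : p' + i - 1 = p' - 1 + i := by omega
        rw [e1, e2, e3, pow_add]
        ring
      rw [Finset.sum_congr rfl step1]
      rw [triangle N (fun j i =>
        (SF hs r 0 (n - (p' + 1) - (j + i)) (q - (p' + 1))).card * s ^ (j + i)
          * (p' - 1 + i).choose (p' - 1))]
      refine Finset.sum_congr rfl fun k hk => ?_
      simp only [Finset.mem_range] at hk
      have step2 : ∀ j ∈ Finset.range (k + 1),
          (SF hs r 0 (n - (p' + 1) - (j + (k - j))) (q - (p' + 1))).card * s ^ (j + (k - j))
              * (p' - 1 + (k - j)).choose (p' - 1)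
            = (SF hs r 0 (n - (p' + 1) - k) (q - (p' + 1))).card * s ^ k
                * (p' - 1 + (k - j)).choose (p' - 1) := by
        intro j hj
        simp only [Finset.mem_range] at hj
        have : j + (k - j) = k := by omega
        rw [this]
      rw [Finset.sum_congr rfl step2, ← Finset.mul_sum]
      have step3 : ∑ j ∈ Finset.range (k + 1), (p' - 1 + (k - j)).choose (p' - 1)
          = (p' + 1 + k - 1).choose p' := by
        have hrefl := Finset.sum_range_reflect (fun i => (p' - 1 + i).choose (p' - 1)) (k + 1)
        have : ∀ j ∈ Finset.range (k + 1),
            (p' - 1 + (k + 1 - 1 - j)).choose (p' - 1) = (p' - 1 + (k - j)).choose (p' - 1) := by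
          intro j hj
          congr 2
        rw [Finset.sum_congr rfl this] at hrefl
        rw [hrefl, hockey]
        congr 1 <;> omega
      rw [step3]

end MAux

/-- For `1 ≤ p ≤ m ≤ n`, `p ≤ q ≤ n`:
`M((m,p),(n,q)) = Σ_{k=0}^{n−m} M((m−p,0),(n−p−k,q−p)) · s^k · C(p+k−1, p−1)`. -/


theorem M_iterated_recurrence (s : ℕ) (hs : 1 ≤ s) (m p n q : ℕ)
    (hp : 1 ≤ p) (hpm : p ≤ m) (hmn : m ≤ n) (hpq : p ≤ q) (hqn : q ≤ n) :
    M s hs m p n q = ∑ k ∈ Finset.range (n - m + 1),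
      M s hs (m - p) 0 (n - p - k) (q - p) * s ^ k * (p + k - 1).choose (p - 1) := by
  rw [MAux.M_eq_SF hs m p n q, MAux.aux hs p (m - p) n q hp (by omega) hpq]
  have hrange : n - (m - p + p) + 1 = n - m + 1 := by omega
  rw [hrange]
  refine Finset.sum_congr rfl fun k hk => ?_
  rw [MAux.M_eq_SF hs (m - p) 0 (n - p - k) (q - p), Nat.sub_zero]
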